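/- Let G and H be finite groups with H nontrivial. Let 𝒫 be the set of primes dividing gcd(|G|,|H|) and 𝒩 the set of indices of proper normal subgroups of G. If G is solvable or H is nilpotent, then Λ_{G,H} = 0 if 𝒫 ∩ 𝒩 = ∅, and Λ_{G,H} = 1/min(𝒫 ∩ 𝒩) otherwise. -/

import Mathlib

/-- An affine homomorphism from `G` to `H` is a function of the form
`g ↦ h * φ₀ g` for a fixed `h : H` and a group homomorphism `φ₀ : G →* H`. -/
def IsAffineHom {G H : Type*} [Group G] [Group H] (φ : G → H) : Prop :=
  ∃ (h : H) (φ₀ : G →* H), ∀ g : G, φ g = h * φ₀ g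

/-- The agreement of two functions `f g : G → H`: the fraction of inputs
on which they agree, `|Eq(f,g)| / |G|`. -/
noncomputable def agr {G H : Type*} (f g : G → H) : ℝ :=
  (Nat.card {x : G // f x = g x} : ℝ) / (Nat.card G : ℝ)

/-- The maximum agreement `Λ_{G,H}`: the maximum of `agr φ ψ` over all pairs of
distinct affine homomorphisms `φ ψ : G → H`. -/
noncomputable def Lambda (G H : Type*) [Group G] [Group H] : ℝ :=
  sSup {r : ℝ | ∃ φ ψ : G → H,
    IsAffineHom φ ∧ IsAffineHom ψ ∧ φ ≠ ψ ∧ r = agr φ ψ}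

open Subgroup



lemma exists_prime_index_subgroup (A : Type*) [CommGroup A] [Finite A] [Nontrivial A] :
    ∃ B : Subgroup A, B.index.Prime := by
  have hfin : Finite (Subgroup A) :=
    Finite.of_injective (fun K : Subgroup A => (K : Set A)) SetLike.coe_injective
  rcases eq_top_or_exists_le_coatom (⊥ : Subgroup A) with h | ⟨M, hM, -⟩
  · exfalso
    obtain ⟨a, b, hab⟩ := exists_pair_ne A
    apply hab
    have ha : a ∈ (⊥ : Subgroup A) := h ▸ mem_top a
    have hb : b ∈ (⊥ : Subgroup A) := h ▸ mem_top b
    rw [Subgroup.mem_bot] at ha hb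
    rw [ha, hb]
  · have hne1 : M.index ≠ 1 := fun h => hM.1 (Subgroup.index_eq_one.mp h)
    have hq : M.index.minFac.Prime := Nat.minFac_prime hne1
    haveI : Fact M.index.minFac.Prime := ⟨hq⟩
    have hdvd : M.index.minFac ∣ Nat.card (A ⧸ M) := by
      rw [← Subgroup.index_eq_card]; exact Nat.minFac_dvd _
    obtain ⟨x, hx⟩ := exists_prime_orderOf_dvd_card' M.index.minFac hdvd
    have hx1 : x ≠ 1 := by
      intro h; rw [h, orderOf_one] at hx; exact hq.one_lt.ne' hx.symm
    have hle : M ≤ Subgroup.comap (QuotientGroup.mk' M) (Subgroup.zpowers x) := by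
      intro m hm
      have h1 : (QuotientGroup.mk' M) m = 1 := (QuotientGroup.eq_one_iff m).mpr hm
      simp only [Subgroup.mem_comap, h1]
      exact one_mem _
    have htop : Subgroup.comap (QuotientGroup.mk' M) (Subgroup.zpowers x) = ⊤ := by
      rcases lt_or_eq_of_le hle with hlt | heq
      · exact hM.2 _ hlt
      · exfalso
        obtain ⟨y, hy⟩ := QuotientGroup.mk'_surjective M x
        have hy' : y ∈ Subgroup.comap (QuotientGroup.mk' M) (Subgroup.zpowers x) := by
          simp only [Subgroup.mem_comap, hy]
          exact Subgroup.mem_zpowers x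
        rw [← heq] at hy'
        exact hx1 (by rw [← hy]; exact (QuotientGroup.eq_one_iff y).mpr hy')
    have hztop : Subgroup.zpowers x = ⊤ := by
      have h2 := congrArg (Subgroup.map (QuotientGroup.mk' M)) htop
      rwa [Subgroup.map_comap_eq_self_of_surjective (QuotientGroup.mk'_surjective M),
        Subgroup.map_top_of_surjective _ (QuotientGroup.mk'_surjective M)] at h2
    refine ⟨M, ?_⟩
    have hcard : Nat.card (A ⧸ M) = M.index.minFac := by
      rw [← hx, ← Nat.card_zpowers, hztop, Subgroup.card_top]
    rw [Subgroup.index_eq_card, hcard]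
    exact hq

lemma exists_prime_index_normal (Q : Type*) [Group Q] [Finite Q] [Nontrivial Q]
    [hs : Group.IsSolvable Q] :
    ∃ N : Subgroup Q, N.Normal ∧ N.index.Prime := by
  have hcomm : commutator Q ≠ ⊤ := by
    intro h
    have hd : ∀ n, derivedSeries Q n = ⊤ := by
      intro n; induction n with
      | zero => rfl
      | succ n ih => rw [derivedSeries_succ, ih, ← commutator_def, h]
    obtain ⟨n, hn⟩ := hs.solvable
    obtain ⟨a, b, hab⟩ := exists_pair_ne Q
    apply hab
    have ha : a ∈ (⊥ : Subgroup Q) := by rw [← hn, hd n]; trivial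
    have hb : b ∈ (⊥ : Subgroup Q) := by rw [← hn, hd n]; trivial
    rw [Subgroup.mem_bot] at ha hb
    rw [ha, hb]
  haveI : Nontrivial (Abelianization Q) := by
    have h1 : 1 < (commutator Q).index := Subgroup.one_lt_index_of_ne_top hcomm
    rw [Subgroup.index_eq_card] at h1
    exact Finite.one_lt_card_iff_nontrivial.mp h1
  obtain ⟨B, hB⟩ := exists_prime_index_subgroup (Abelianization Q)
  have hsurj : Function.Surjective (Abelianization.of (G := Q)) := fun y =>
    (Quotient.exists_rep y).imp fun a ha => ha
  refine ⟨Subgroup.comap Abelianization.of B, (B.normal_of_comm).comap _, ?_⟩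
  rw [Subgroup.index_comap_of_surjective _ hsurj]
  exact hB


lemma key_lemma {G : Type*} [Group G] [Finite G] (K : Subgroup G) (hK : K ≠ ⊤)
    (hsolv : Group.IsSolvable (G ⧸ K.normalCore)) :
    ∃ q : ℕ, q.Prime ∧ q ≤ K.index ∧ q ∣ Nat.card (G ⧸ K.normalCore) ∧
      ∃ N : Subgroup G, N.Normal ∧ N ≠ ⊤ ∧ N.index = q := by
  haveI := hsolv
  have hCK : K.normalCore ≤ K := normalCore_le K
  have hCtop : K.normalCore ≠ ⊤ := fun h => hK (top_le_iff.mp (h ▸ hCK))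
  haveI : Nontrivial (G ⧸ K.normalCore) := by
    have h1 : 1 < (K.normalCore).index := Subgroup.one_lt_index_of_ne_top hCtop
    rw [Subgroup.index_eq_card] at h1
    exact Finite.one_lt_card_iff_nontrivial.mp h1
  obtain ⟨N', hN'norm, hN'prime⟩ := exists_prime_index_normal (G ⧸ K.normalCore)
  have hidx : (Subgroup.comap (QuotientGroup.mk' K.normalCore) N').index = N'.index :=
    Subgroup.index_comap_of_surjective _ (QuotientGroup.mk'_surjective _)
  have hdvd1 : N'.index ∣ Nat.card (G ⧸ K.normalCore) := N'.index_dvd_card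
  have hdvd2 : Nat.card (G ⧸ K.normalCore) ∣ Nat.factorial K.index := by
    letI : DecidableEq (G ⧸ K) := Classical.decEq _
    letI : Fintype (G ⧸ K) := Fintype.ofFinite _
    have hker : K.normalCore = (MulAction.toPermHom G (G ⧸ K)).ker :=
      Subgroup.normalCore_eq_ker K
    have h1 : Nat.card (G ⧸ K.normalCore) =
        Nat.card (MulAction.toPermHom G (G ⧸ K)).range := by
      rw [hker]
      exact Nat.card_congr
        (QuotientGroup.quotientKerEquivRange (MulAction.toPermHom G (G ⧸ K))).toEquiv
    have h2 : Nat.card (MulAction.toPermHom G (G ⧸ K)).range ∣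
        Nat.card (Equiv.Perm (G ⧸ K)) := Subgroup.card_subgroup_dvd_card _
    have h3 : Nat.card (Equiv.Perm (G ⧸ K)) = Nat.factorial K.index := by
      rw [Nat.card_eq_fintype_card, Fintype.card_perm, Subgroup.index_eq_card,
        Nat.card_eq_fintype_card]
    rw [h1, ← h3]
    exact h2
  have hle : N'.index ≤ K.index :=
    (Nat.Prime.dvd_factorial hN'prime).mp (hdvd1.trans hdvd2)
  refine ⟨N'.index, hN'prime, hle, hdvd1,
    Subgroup.comap (QuotientGroup.mk' K.normalCore) N', hN'norm.comap _, ?_, hidx⟩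
  intro h
  rw [h, Subgroup.index_top] at hidx
  exact hN'prime.one_lt.ne' hidx.symm

lemma agr_dichotomy {G H : Type*} [Group G] [Group H] [Finite G] [Finite H]
    (hGH : IsSolvable G ∨ Group.IsNilpotent H) {φ ψ : G → H}
    (hφ : IsAffineHom φ) (hψ : IsAffineHom ψ) (hne : φ ≠ ψ) :
    agr φ ψ = 0 ∨ ∃ q : ℕ, q.Prime ∧ q ∣ Nat.card G ∧ q ∣ Nat.card H ∧
      (∃ N : Subgroup G, N.Normal ∧ N ≠ ⊤ ∧ N.index = q) ∧ agr φ ψ ≤ 1 / (q : ℝ) := by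
  obtain ⟨a, φ₀, hφ⟩ := hφ
  obtain ⟨b, ψ₀, hψ⟩ := hψ
  by_cases hE : ∀ x, φ x ≠ ψ x
  · left
    haveI : IsEmpty {x : G // φ x = ψ x} := ⟨fun x => hE x.1 x.2⟩
    unfold agr
    rw [Nat.card_of_isEmpty, Nat.cast_zero, zero_div]
  · push_neg at hE
    obtain ⟨x₀, hx₀⟩ := hE
    right
    have hx₀' : a * φ₀ x₀ = b * ψ₀ x₀ := by rw [← hφ, ← hψ]; exact hx₀
    have hne0 : φ₀ ≠ ψ₀ := by
      rintro rfl
      have hab : a = b := mul_right_cancel hx₀'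
      apply hne
      funext x
      rw [hφ, hψ, hab]
    set K := φ₀.eqLocus ψ₀ with hKdef
    have hmemK : ∀ x, x ∈ K ↔ φ₀ x = ψ₀ x := fun x => Iff.rfl
    have hKtop : K ≠ ⊤ := by
      intro h
      apply hne0
      ext x
      exact (hmemK x).mp (h ▸ Subgroup.mem_top x)
    have hiff : ∀ x : G, (φ x = ψ x) ↔ φ₀ (x₀⁻¹ * x) = ψ₀ (x₀⁻¹ * x) := by
      intro x
      rw [hφ, hψ, map_mul, map_mul, map_inv, map_inv]
      constructor
      · intro h
        calc (φ₀ x₀)⁻¹ * φ₀ x = (a * φ₀ x₀)⁻¹ * (a * φ₀ x) := by group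
          _ = (b * ψ₀ x₀)⁻¹ * (b * ψ₀ x) := by rw [hx₀', h]
          _ = (ψ₀ x₀)⁻¹ * ψ₀ x := by group
      · intro h
        calc a * φ₀ x = (a * φ₀ x₀) * ((φ₀ x₀)⁻¹ * φ₀ x) := by group
          _ = (b * ψ₀ x₀) * ((ψ₀ x₀)⁻¹ * ψ₀ x) := by rw [hx₀', h]
          _ = b * ψ₀ x := by group
    have hcard : Nat.card {x : G // φ x = ψ x} = Nat.card K := by
      apply Nat.card_congr
      exact Equiv.subtypeEquiv (Equiv.mulLeft x₀⁻¹)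
        (fun x => (hiff x).trans (hmemK (x₀⁻¹ * x)).symm)
    set Φ := φ₀.prod ψ₀ with hΦdef
    have hkerK : Φ.ker ≤ K := by
      intro x hx
      rw [MonoidHom.mem_ker] at hx
      show φ₀ x = ψ₀ x
      rw [show φ₀ x = 1 from congrArg Prod.fst hx, show ψ₀ x = 1 from congrArg Prod.snd hx]
    have hkerC : Φ.ker ≤ K.normalCore := Subgroup.normal_le_normalCore.mpr hkerK
    have hsolv : Group.IsSolvable (G ⧸ K.normalCore) := by
      rcases hGH with hG | hH
      · haveI : Group.IsSolvable G := hG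
        infer_instance
      · haveI := hH
        haveI : Group.IsSolvable (H × H) := inferInstance
        haveI : Group.IsSolvable (G ⧸ Φ.ker) :=
          solvable_of_solvable_injective (QuotientGroup.kerLift_injective Φ)
        have hsurj : Function.Surjective
            (QuotientGroup.map Φ.ker K.normalCore (MonoidHom.id G)
              (by simpa using hkerC)) := by
          intro y
          refine QuotientGroup.induction_on y fun g => ?_
          exact ⟨QuotientGroup.mk g, by simp [QuotientGroup.map_mk]⟩
        exact solvable_of_surjective hsurj
    obtain ⟨q, hq, hqle, hqdvd, N, hNn, hNt, hNi⟩ := key_lemma K hKtop hsolv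
    have hqH : q ∣ Nat.card H := by
      have h1 : Nat.card (G ⧸ K.normalCore) ∣ Nat.card (G ⧸ Φ.ker) := by
        rw [← Subgroup.index_eq_card, ← Subgroup.index_eq_card]
        exact Subgroup.index_dvd_of_le hkerC
      have h2 : Nat.card (G ⧸ Φ.ker) = Nat.card Φ.range :=
        Nat.card_congr (QuotientGroup.quotientKerEquivRange Φ).toEquiv
      have h3 : Nat.card Φ.range ∣ Nat.card (H × H) := Subgroup.card_subgroup_dvd_card _
      have h4 : q ∣ Nat.card H * Nat.card H := by
        have h5 := hqdvd.trans h1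
        rw [h2] at h5
        have h6 := h5.trans h3
        rwa [Nat.card_prod] at h6
      rcases (Nat.Prime.dvd_mul hq).mp h4 with h | h <;> exact h
    have hqG : q ∣ Nat.card G := hNi ▸ N.index_dvd_card
    refine ⟨q, hq, hqG, hqH, ⟨N, hNn, hNt, hNi⟩, ?_⟩
    unfold agr
    rw [hcard]
    have hKcard : Nat.card K * K.index = Nat.card G := K.card_mul_index
    have hGpos : 0 < Nat.card G := Nat.card_pos
    have hqpos : (0:ℝ) < (q : ℝ) := by exact_mod_cast hq.pos
    rw [div_le_div_iff₀ (by exact_mod_cast hGpos) hqpos, one_mul]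
    have hmain : Nat.card K * q ≤ Nat.card G := by
      calc Nat.card K * q ≤ Nat.card K * K.index := Nat.mul_le_mul_left _ hqle
        _ = Nat.card G := hKcard
    exact_mod_cast hmain

lemma exists_pair_agr {G H : Type*} [Group G] [Group H] [Finite G] [Finite H]
    {p : ℕ} (hp : p.Prime) (hpH : p ∣ Nat.card H)
    {K₀ : Subgroup G} (hn : K₀.Normal) (ht : K₀ ≠ ⊤) (hi : K₀.index = p) :
    ∃ φ ψ : G → H, IsAffineHom φ ∧ IsAffineHom ψ ∧ φ ≠ ψ ∧ agr φ ψ = 1 / (p : ℝ) := by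
  haveI := hn
  haveI : Fact p.Prime := ⟨hp⟩
  obtain ⟨h, hh⟩ := exists_prime_orderOf_dvd_card' p hpH
  have hh1 : h ≠ 1 := by
    intro h1; rw [h1, orderOf_one] at hh; exact hp.one_lt.ne' hh.symm
  have hcardQ : Nat.card (G ⧸ K₀) = p := by rw [← Subgroup.index_eq_card, hi]
  haveI hcyc : IsCyclic (G ⧸ K₀) := isCyclic_of_prime_card hcardQ
  have hpow : (zmultiplesHom (Additive H) (Additive.ofMul h))
      ((Nat.card (G ⧸ K₀) : ℤ)) = 0 := by
    simp only [zmultiplesHom_apply, hcardQ]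
    rw [← ofMul_zpow]
    have hz : h ^ (p : ℤ) = 1 := by rw [zpow_natCast, ← hh, pow_orderOf_eq_one]
    rw [hz]
    rfl
  set e := zmodCyclicMulEquiv hcyc with he
  set χ : (G ⧸ K₀) →* H :=
    (AddMonoidHom.toMultiplicativeLeft
      (ZMod.lift (Nat.card (G ⧸ K₀))
        ⟨zmultiplesHom (Additive H) (Additive.ofMul h), hpow⟩)).comp e.symm.toMonoidHom
    with hχ
  have hval : χ (e (Multiplicative.ofAdd (1 : ZMod (Nat.card (G ⧸ K₀))))) = h := by
    rw [hχ]
    simp only [MonoidHom.comp_apply, MulEquiv.coe_toMonoidHom, MulEquiv.symm_apply_apply]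
    rw [AddMonoidHom.coe_toMultiplicativeLeft]
    simp only [Function.comp_apply, toAdd_ofAdd]
    have h1 : ((1 : ℤ) : ZMod (Nat.card (G ⧸ K₀))) = (1 : ZMod (Nat.card (G ⧸ K₀))) := by
      push_cast; rfl
    rw [← h1, ZMod.lift_coe]
    simp
  have hker : χ.ker = ⊥ := by
    have hdvd : Nat.card χ.ker ∣ p := by
      rw [← hcardQ]; exact Subgroup.card_subgroup_dvd_card _
    rcases hp.eq_one_or_self_of_dvd _ hdvd with h1 | h1
    · exact Subgroup.card_eq_one.mp h1
    · exfalso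
      have htop : χ.ker = ⊤ := Subgroup.eq_top_of_card_eq _ (by rw [h1, hcardQ])
      have hm : e (Multiplicative.ofAdd (1 : ZMod (Nat.card (G ⧸ K₀)))) ∈ χ.ker :=
        htop ▸ Subgroup.mem_top _
      rw [MonoidHom.mem_ker, hval] at hm
      exact hh1 hm
  set φ₀ : G →* H := χ.comp (QuotientGroup.mk' K₀) with hφ₀
  have hkerφ₀ : φ₀.ker = K₀ := by
    rw [hφ₀, ← MonoidHom.comap_ker, hker]
    rw [show Subgroup.comap (QuotientGroup.mk' K₀) ⊥ = (QuotientGroup.mk' K₀).ker from rfl]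
    exact QuotientGroup.ker_mk' K₀
  obtain ⟨x₁, hx₁⟩ : ∃ x, x ∉ K₀ := by
    by_contra hc
    push_neg at hc
    exact ht ((Subgroup.eq_top_iff' K₀).mpr hc)
  refine ⟨⇑φ₀, fun _ => 1, ⟨1, φ₀, fun g => (one_mul _).symm⟩,
    ⟨1, 1, fun g => by simp⟩, ?_, ?_⟩
  · intro heq
    apply hx₁
    rw [← hkerφ₀, MonoidHom.mem_ker]
    exact congrFun heq x₁
  · unfold agr
    have hcard : Nat.card {x : G // φ₀ x = 1} = Nat.card K₀ := by
      apply Nat.card_congr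
      apply Equiv.subtypeEquivRight
      intro x
      rw [← hkerφ₀]
      exact Iff.rfl
    rw [hcard]
    have hKcard : Nat.card K₀ * p = Nat.card G := by rw [← hi]; exact K₀.card_mul_index
    have hGpos : (0:ℝ) < (Nat.card G : ℝ) := by exact_mod_cast Nat.card_pos
    have hppos : (0:ℝ) < (p : ℝ) := by exact_mod_cast hp.pos
    rw [div_eq_div_iff hGpos.ne' hppos.ne', one_mul]
    exact_mod_cast hKcard

theorem main_formula (G H : Type*) [Group G] [Group H] [Finite G] [Finite H]
    [Nontrivial H] (hGH : IsSolvable G ∨ Group.IsNilpotent H)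
    (P : Set ℕ) (hP : P = {p : ℕ | p.Prime ∧ p ∣ Nat.gcd (Nat.card G) (Nat.card H)})
    (N : Set ℕ)
    (hN : N = {m : ℕ | ∃ K : Subgroup G, K.Normal ∧ K ≠ ⊤ ∧ K.index = m}) :
    (P ∩ N = ∅ → Lambda G H = 0) ∧
    ((P ∩ N).Nonempty → Lambda G H = 1 / ((sInf (P ∩ N) : ℕ) : ℝ)) := by
  subst hP
  subst hN
  have hzero_mem : (0:ℝ) ∈ {r : ℝ | ∃ φ ψ : G → H,
      IsAffineHom φ ∧ IsAffineHom ψ ∧ φ ≠ ψ ∧ r = agr φ ψ} := by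
    obtain ⟨h₀, hh₀⟩ := exists_ne (1 : H)
    refine ⟨fun _ => 1, fun _ => h₀, ⟨1, 1, fun g => by simp⟩,
      ⟨h₀, 1, fun g => by simp⟩, ?_, ?_⟩
    · intro heq
      exact hh₀ (congrFun heq 1).symm
    · haveI : IsEmpty {x : G // (fun _ => (1:H)) x = (fun _ => h₀) x} :=
        ⟨fun x => hh₀ x.2.symm⟩
      unfold agr
      rw [Nat.card_of_isEmpty, Nat.cast_zero, zero_div]
  have hmem_of : ∀ q : ℕ, q.Prime → q ∣ Nat.card G → q ∣ Nat.card H →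
      (∃ K : Subgroup G, K.Normal ∧ K ≠ ⊤ ∧ K.index = q) →
      q ∈ ({p : ℕ | p.Prime ∧ p ∣ Nat.gcd (Nat.card G) (Nat.card H)} ∩
        {m : ℕ | ∃ K : Subgroup G, K.Normal ∧ K ≠ ⊤ ∧ K.index = m}) := by
    intro q hq hG hH hK
    exact ⟨⟨hq, Nat.dvd_gcd hG hH⟩, hK⟩
  constructor
  · intro hPN
    have hset : {r : ℝ | ∃ φ ψ : G → H,
        IsAffineHom φ ∧ IsAffineHom ψ ∧ φ ≠ ψ ∧ r = agr φ ψ} = {0} := by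
      apply Set.eq_singleton_iff_unique_mem.mpr
      refine ⟨hzero_mem, ?_⟩
      rintro r ⟨φ, ψ, hφ, hψ, hne, hr⟩
      rcases agr_dichotomy hGH hφ hψ hne with h0 | ⟨q, hq, hqG, hqH, hK, -⟩
      · rw [hr, h0]
      · exfalso
        have := hmem_of q hq hqG hqH hK
        rw [hPN] at this
        exact this
    unfold Lambda
    rw [hset, csSup_singleton]
  · intro hPN
    set PN := {p : ℕ | p.Prime ∧ p ∣ Nat.gcd (Nat.card G) (Nat.card H)} ∩
        {m : ℕ | ∃ K : Subgroup G, K.Normal ∧ K ≠ ⊤ ∧ K.index = m} with hPNdef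
    have hmem := Nat.sInf_mem hPN
    have hprime := hmem.1.1
    have hgcd := hmem.1.2
    have hdH := hgcd.trans (Nat.gcd_dvd_right _ _)
    obtain ⟨K₀, hK₀n, hK₀t, hK₀i⟩ := hmem.2
    obtain ⟨φ, ψ, hφ, hψ, hne, hagr⟩ := exists_pair_agr hprime hdH hK₀n hK₀t hK₀i
    have hppos : (0:ℝ) < ((sInf PN : ℕ) : ℝ) := by exact_mod_cast hprime.pos
    have hub : ∀ r ∈ {r : ℝ | ∃ φ ψ : G → H,
        IsAffineHom φ ∧ IsAffineHom ψ ∧ φ ≠ ψ ∧ r = agr φ ψ},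
        r ≤ 1 / ((sInf PN : ℕ) : ℝ) := by
      rintro r ⟨φ', ψ', hφ', hψ', hne', hr'⟩
      rcases agr_dichotomy hGH hφ' hψ' hne' with h0 | ⟨q, hq, hqG, hqH, hK, hle⟩
      · rw [hr', h0]; positivity
      · have hqmem := hmem_of q hq hqG hqH hK
        have hpq : sInf PN ≤ q := Nat.sInf_le hqmem
        have : 1 / (q:ℝ) ≤ 1 / ((sInf PN : ℕ) : ℝ) :=
          one_div_le_one_div_of_le hppos (by exact_mod_cast hpq)
        rw [hr']
        exact hle.trans this
    unfold Lambda
    apply le_antisymm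
    · exact csSup_le ⟨0, hzero_mem⟩ hub
    · apply le_csSup ⟨1 / ((sInf PN : ℕ) : ℝ), hub⟩
      exact ⟨φ, ψ, hφ, hψ, hne, hagr.symm⟩
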